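/- For every dimension n ≥ 2 and every real special orthogonal matrix V ∈ ℝ^{n×n} (i.e., V Vᵀ = I_n and det V = 1), there exists a family of angles θ = (θ_{ij})_{1 ≤ i < j ≤ n} in ℝ such that V = ∏_{i=1}^{n−1} ∏_{j=i+1}^{n} G_{ij}(θ_{ij}), with the factors multiplied in lexicographic order of (i,j). -/

import Mathlib

open Matrix

/-- The Givens rotation matrix `G_{ij}(θ) ∈ ℝ^{n×n}`: the identity matrix except for the
entries `(i,i) = (j,j) = cos θ`, `(i,j) = -sin θ` and `(j,i) = sin θ`. -/
noncomputable def givensMat (n : ℕ) (i j : Fin n) (θ : ℝ) : Matrix (Fin n) (Fin n) ℝ :=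
  fun k l =>
    if k = i ∧ l = i then Real.cos θ
    else if k = j ∧ l = j then Real.cos θ
    else if k = i ∧ l = j then -Real.sin θ
    else if k = j ∧ l = i then Real.sin θ
    else if k = l then 1 else 0

/-- `V(θ) = ∏_{i=1}^{n-1} ∏_{j=i+1}^{n} G_{ij}(θ_{ij})`, the factors multiplied in
lexicographic order of the index pairs `(i,j)`. -/
noncomputable def rotMat (n : ℕ) (θ : Fin n → Fin n → ℝ) : Matrix (Fin n) (Fin n) ℝ :=
  (((List.finRange n).map (fun i =>
      ((List.finRange n).filter (fun j => i < j)).map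
        (fun j => givensMat n i j (θ i j)))).flatten).prod

lemma exists_cos_sin (a b : ℝ) (h : a^2 + b^2 = 1) : ∃ φ, Real.cos φ = a ∧ Real.sin φ = b := by
  have ha : -1 ≤ a ∧ a ≤ 1 := by constructor <;> nlinarith [sq_nonneg b]
  have hb2 : b^2 = 1 - a^2 := by linarith
  rcases le_or_gt 0 b with hb | hb
  · refine ⟨Real.arccos a, Real.cos_arccos ha.1 ha.2, ?_⟩
    rw [Real.sin_arccos, ← hb2]
    exact Real.sqrt_sq hb
  · refine ⟨-Real.arccos a, by rw [Real.cos_neg]; exact Real.cos_arccos ha.1 ha.2, ?_⟩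
    rw [Real.sin_neg, Real.sin_arccos, ← hb2, Real.sqrt_sq_eq_abs, abs_of_neg hb, neg_neg]


lemma givens_mulVec {n : ℕ} {i j : Fin n} (hij : i ≠ j) (θ : ℝ) (v : Fin n → ℝ) :
    (givensMat n i j θ).mulVec v = fun k =>
      if k = i then Real.cos θ * v i - Real.sin θ * v j
      else if k = j then Real.sin θ * v i + Real.cos θ * v j
      else v k := by
  funext k
  simp only [Matrix.mulVec, dotProduct, givensMat]
  rcases eq_or_ne k i with rfl | hki
  · have this1 : ∀ m ∈ Finset.univ, ((if k = k ∧ m = k then Real.cos θ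
        else if k = j ∧ m = j then Real.cos θ
        else if k = k ∧ m = j then -Real.sin θ
        else if k = j ∧ m = k then Real.sin θ
        else if k = m then 1 else 0) * v m)
        = (if m = k then Real.cos θ * v k else 0) + (if m = j then -(Real.sin θ * v j) else 0) := by
      intro m _
      rcases eq_or_ne m k with rfl | hmk
      · simp [hij]
      · rcases eq_or_ne m j with rfl | hmj
        · simp [hmk, hij]
        · simp [hmk, hmj, Ne.symm hmk, hij]
    rw [Finset.sum_congr rfl this1, Finset.sum_add_distrib,
      Finset.sum_ite_eq' Finset.univ k, Finset.sum_ite_eq' Finset.univ j]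
    simp; ring
  · rcases eq_or_ne k j with rfl | hkj
    · have this1 : ∀ m ∈ Finset.univ, ((if k = i ∧ m = i then Real.cos θ
          else if k = k ∧ m = k then Real.cos θ
          else if k = i ∧ m = k then -Real.sin θ
          else if k = k ∧ m = i then Real.sin θ
          else if k = m then 1 else 0) * v m)
          = (if m = i then Real.sin θ * v i else 0) + (if m = k then Real.cos θ * v k else 0) := by
        intro m _
        rcases eq_or_ne m i with rfl | hmi
        · simp [hki, Ne.symm hki]
        · rcases eq_or_ne m k with rfl | hmk
          · simp [hki, hmi]
          · simp [hki, hmi, hmk, Ne.symm hmk]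
      rw [Finset.sum_congr rfl this1, Finset.sum_add_distrib,
        Finset.sum_ite_eq' Finset.univ i, Finset.sum_ite_eq' Finset.univ k]
      simp [hki]
    · have this1 : ∀ m ∈ Finset.univ, ((if k = i ∧ m = i then Real.cos θ
          else if k = j ∧ m = j then Real.cos θ
          else if k = i ∧ m = j then -Real.sin θ
          else if k = j ∧ m = i then Real.sin θ
          else if k = m then 1 else 0) * v m)
          = (if m = k then v k else 0) := by
        intro m _
        rcases eq_or_ne m k with rfl | hmk
        · simp [hki, hkj]
        · simp [hki, hkj, hmk, Ne.symm hmk]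
      rw [Finset.sum_congr rfl this1, Finset.sum_ite_eq' Finset.univ k]
      simp [hki, hkj]

lemma eq_of_mulVec {n : ℕ} {A B : Matrix (Fin n) (Fin n) ℝ}
    (h : ∀ v, A.mulVec v = B.mulVec v) : A = B := by
  ext k l
  have := congrFun (h (Pi.single l 1)) k
  simpa [Matrix.mulVec_single] using this

lemma givens_zero {n : ℕ} {i j : Fin n} (hij : i ≠ j) : givensMat n i j 0 = 1 := by
  ext k l
  rcases eq_or_ne k i with h1 | h1 <;> rcases eq_or_ne k j with h2 | h2 <;>
    rcases eq_or_ne l i with h3 | h3 <;> rcases eq_or_ne l j with h4 | h4 <;>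
      simp_all [givensMat, Matrix.one_apply]

lemma givens_mul {n : ℕ} {i j : Fin n} (hij : i ≠ j) (α β : ℝ) :
    givensMat n i j α * givensMat n i j β = givensMat n i j (α + β) := by
  apply eq_of_mulVec; intro v
  rw [← Matrix.mulVec_mulVec, givens_mulVec hij, givens_mulVec hij, givens_mulVec hij]
  funext k
  rcases eq_or_ne k i with rfl | hki
  · simp [hij, Ne.symm hij, Real.cos_add, Real.sin_add]; ring
  · rcases eq_or_ne k j with rfl | hkj
    · simp [hij, Ne.symm hij, hki, Real.cos_add, Real.sin_add]; ring
    · simp [hki, hkj]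

lemma givens_transpose {n : ℕ} {i j : Fin n} (hij : i ≠ j) (θ : ℝ) :
    (givensMat n i j θ)ᵀ = givensMat n i j (-θ) := by
  ext k l
  rcases eq_or_ne k i with h1 | h1 <;> rcases eq_or_ne k j with h2 | h2 <;>
    rcases eq_or_ne l i with h3 | h3 <;> rcases eq_or_ne l j with h4 | h4 <;>
      simp_all [givensMat, Matrix.transpose_apply, Matrix.one_apply, eq_comm]

lemma givens_mul_transpose {n : ℕ} {i j : Fin n} (hij : i ≠ j) (θ : ℝ) :
    givensMat n i j θ * (givensMat n i j θ)ᵀ = 1 := by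
  rw [givens_transpose hij, givens_mul hij, add_neg_cancel, givens_zero hij]

lemma givens_transpose_mul {n : ℕ} {i j : Fin n} (hij : i ≠ j) (θ : ℝ) :
    (givensMat n i j θ)ᵀ * givensMat n i j θ = 1 := by
  rw [givens_transpose hij, givens_mul hij, neg_add_cancel, givens_zero hij]

lemma givens_det {n : ℕ} {i j : Fin n} (hij : i ≠ j) (θ : ℝ) :
    (givensMat n i j θ).det = 1 := by
  have h2 : givensMat n i j θ = givensMat n i j (θ/2) * givensMat n i j (θ/2) := by
    rw [givens_mul hij]; ring_nf
  have ho : (givensMat n i j (θ/2)).det * (givensMat n i j (θ/2)).det = 1 := by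
    have := congrArg Matrix.det (givens_mul_transpose hij (θ/2))
    rwa [Matrix.det_mul, Matrix.det_transpose, Matrix.det_one] at this
  rw [h2, Matrix.det_mul, ho]

lemma sum_split_two {n : ℕ} (a b : Fin n) (hab : a ≠ b) (f : Fin n → ℝ) :
    ∑ k, f k = f a + f b + ∑ k ∈ (Finset.univ.erase a).erase b, f k := by
  rw [← Finset.add_sum_erase _ f (Finset.mem_univ a),
    ← Finset.add_sum_erase _ f (Finset.mem_erase.mpr ⟨Ne.symm hab, Finset.mem_univ b⟩)]
  ring

lemma elim_lemma {n : ℕ} (L : List (Fin (n+1))) (hne : (0 : Fin (n+1)) ∉ L) (hnd : L.Nodup) :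
    ∀ w : Fin (n+1) → ℝ, (∀ k, k ≠ 0 → k ∉ L → w k = 0) → (∑ k, w k ^ 2 = 1) →
    (0 ≤ w 0 ∨ L ≠ []) →
    ∃ φ : Fin (n+1) → ℝ,
      ((L.map (fun j => givensMat (n+1) 0 j (φ j))).prod).mulVec (Pi.single 0 1) = w := by
  induction L with
  | nil =>
    intro w hsupp hnorm hsign
    refine ⟨0, ?_⟩
    have hz : ∀ k, k ≠ (0 : Fin (n+1)) → w k = 0 := fun k hk => hsupp k hk List.not_mem_nil
    have hsum : ∑ k, w k ^ 2 = w 0 ^ 2 := by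
      apply Finset.sum_eq_single
      · intro k _ hk ; rw [hz k hk]; ring
      · intro h; exact absurd (Finset.mem_univ _) h
    have hw0 : w 0 = 1 := by
      rcases hsign with h | h
      · nlinarith [hsum ▸ hnorm]
      · exact absurd rfl h
    simp only [List.map_nil, List.prod_nil, Matrix.one_mulVec]
    funext k
    rcases eq_or_ne k 0 with rfl | hk
    · simp [hw0]
    · simp [hk, hz k hk]
  | cons j L' ih =>
    intro w hsupp hnorm hsign
    have hj0 : (j : Fin (n+1)) ≠ 0 := fun h => hne (h ▸ List.mem_cons_self)
    have hjL' : j ∉ L' := (List.nodup_cons.mp hnd).1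
    have hne' : (0 : Fin (n+1)) ∉ L' := fun h => hne (List.mem_cons_of_mem j h)
    have hnd' : L'.Nodup := (List.nodup_cons.mp hnd).2
    set r : ℝ := Real.sqrt (w 0 ^ 2 + w j ^ 2) with hr
    have hr0 : 0 ≤ r := Real.sqrt_nonneg _
    have hr2 : r ^ 2 = w 0 ^ 2 + w j ^ 2 := Real.sq_sqrt (by positivity)
    -- choose the angle
    have hc : ∃ c : ℝ, Real.cos c * r = w 0 ∧ Real.sin c * r = w j := by
      rcases eq_or_lt_of_le hr0 with h0 | h0
      · refine ⟨0, ?_, ?_⟩ <;> · rw [← h0]; nlinarith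
      · obtain ⟨c, hc1, hc2⟩ := exists_cos_sin (w 0 / r) (w j / r)
          (by field_simp; linarith [hr2])
        exact ⟨c, by rw [hc1]; field_simp, by rw [hc2]; field_simp⟩
    obtain ⟨c, hc1, hc2⟩ := hc
    set w' : Fin (n+1) → ℝ := Function.update (Function.update w 0 r) j 0 with hw'
    have hw'0 : w' 0 = r := by rw [hw', Function.update_of_ne (Ne.symm hj0), Function.update_self]
    have hw'j : w' j = 0 := by simp [hw']
    have hw'k : ∀ k, k ≠ 0 → k ≠ j → w' k = w k := by
      intro k h1 h2; simp [hw', Function.update_apply, h1, h2]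
    have hnorm' : ∑ k, w' k ^ 2 = 1 := by
      rw [sum_split_two 0 j (Ne.symm hj0), hw'0, hw'j] at *
      rw [← hnorm]
      have : ∑ k ∈ (Finset.univ.erase 0).erase j, w' k ^ 2
          = ∑ k ∈ (Finset.univ.erase 0).erase j, w k ^ 2 := by
        apply Finset.sum_congr rfl
        intro k hk
        rw [hw'k k (Finset.ne_of_mem_erase (Finset.mem_of_mem_erase hk))
          (Finset.ne_of_mem_erase hk)]
      rw [this]; nlinarith [hr2]
    obtain ⟨φ', hφ'⟩ := ih hne' hnd' w'
      (fun k h1 h2 => by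
        rcases eq_or_ne k j with rfl | h3
        · exact hw'j
        · rw [hw'k k h1 h3]
          exact hsupp k h1 (by simp [h3, h2]))
      hnorm' (Or.inl (hw'0 ▸ hr0))
    refine ⟨Function.update φ' j c, ?_⟩
    have hmapeq : L'.map (fun j' => givensMat (n+1) 0 j' (Function.update φ' j c j'))
        = L'.map (fun j' => givensMat (n+1) 0 j' (φ' j')) := by
      apply List.map_congr_left
      intro j' hj'
      rw [Function.update_of_ne (fun h => hjL' (by rwa [h] at hj')) c φ']
    rw [List.map_cons, List.prod_cons, ← Matrix.mulVec_mulVec, hmapeq, hφ',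
      Function.update_self, givens_mulVec (Ne.symm hj0)]
    funext k
    rcases eq_or_ne k 0 with rfl | hk0
    · simp [hw'0, hw'j, hc1]
    · rcases eq_or_ne k j with rfl | hkj
      · simp [hk0, hw'0, hw'j, hc2]
      · simp [hk0, hkj, hw'k k hk0 hkj]

noncomputable def emb {n : ℕ} (M : Matrix (Fin n) (Fin n) ℝ) :
    Matrix (Fin (n+1)) (Fin (n+1)) ℝ :=
  fun k l => Fin.cases (Fin.cases 1 (fun _ => 0) l) (fun k' => Fin.cases 0 (fun l' => M k' l') l) k

@[simp] lemma emb_zero_zero {n : ℕ} (M : Matrix (Fin n) (Fin n) ℝ) : emb M 0 0 = 1 := rfl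
@[simp] lemma emb_zero_succ {n : ℕ} (M : Matrix (Fin n) (Fin n) ℝ) (l : Fin n) :
    emb M 0 l.succ = 0 := rfl
@[simp] lemma emb_succ_zero {n : ℕ} (M : Matrix (Fin n) (Fin n) ℝ) (k : Fin n) :
    emb M k.succ 0 = 0 := rfl
@[simp] lemma emb_succ_succ {n : ℕ} (M : Matrix (Fin n) (Fin n) ℝ) (k l : Fin n) :
    emb M k.succ l.succ = M k l := rfl

lemma emb_one {n : ℕ} : emb (1 : Matrix (Fin n) (Fin n) ℝ) = 1 := by
  ext k l
  induction k using Fin.cases with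
  | zero => induction l using Fin.cases with
    | zero => simp
    | succ l => simp [Matrix.one_apply, (Fin.succ_ne_zero l).symm]
  | succ k => induction l using Fin.cases with
    | zero => simp [Matrix.one_apply, Fin.succ_ne_zero k]
    | succ l => simp [Matrix.one_apply, Fin.succ_inj]

lemma emb_mul {n : ℕ} (M N : Matrix (Fin n) (Fin n) ℝ) :
    emb (M * N) = emb M * emb N := by
  ext k l
  rw [Matrix.mul_apply, Fin.sum_univ_succ]
  induction k using Fin.cases with
  | zero => induction l using Fin.cases with
    | zero => simp
    | succ l => simp
  | succ k => induction l using Fin.cases with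
    | zero => simp
    | succ l => simp [Matrix.mul_apply]

lemma emb_prod {n : ℕ} (L : List (Matrix (Fin n) (Fin n) ℝ)) :
    (L.map emb).prod = emb L.prod := by
  induction L with
  | nil => simp [emb_one]
  | cons M L ih => simp [List.prod_cons, ih, emb_mul]

lemma emb_givens {n : ℕ} (i j : Fin n) (θ : ℝ) :
    emb (givensMat n i j θ) = givensMat (n+1) i.succ j.succ θ := by
  ext k l
  induction k using Fin.cases with
  | zero => induction l using Fin.cases with
    | zero => simp [givensMat, (Fin.succ_ne_zero i).symm, (Fin.succ_ne_zero j).symm]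
    | succ l => simp [givensMat, (Fin.succ_ne_zero i).symm, (Fin.succ_ne_zero j).symm,
        (Fin.succ_ne_zero l).symm]
  | succ k => induction l using Fin.cases with
    | zero => simp [givensMat, (Fin.succ_ne_zero i).symm, (Fin.succ_ne_zero j).symm,
        Fin.succ_ne_zero k]
    | succ l => simp [givensMat, Fin.succ_inj]

lemma rotMat_succ (n : ℕ) (θ : Fin (n+1) → Fin (n+1) → ℝ) :
    rotMat (n+1) θ =
      (((List.finRange n).map (fun m => givensMat (n+1) 0 m.succ (θ 0 m.succ))).prod) *
        emb (rotMat n (fun a b => θ a.succ b.succ)) := by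
  rw [rotMat, List.finRange_succ]
  rw [List.map_cons, List.flatten_cons, List.prod_append]
  congr 1
  · -- first factor
    congr 1
    rw [List.filter_cons]
    have h1 : (List.finRange n).filter ((fun j => decide ((0:Fin (n+1)) < j)) ∘ Fin.succ)
        = List.finRange n := by
      apply List.filter_eq_self.mpr
      intro a _
      simp [Fin.succ_pos]
    simp only [lt_self_iff_false, decide_false, Bool.false_eq_true, if_false, List.filter_map,
      h1, List.map_map]
    rfl
  · -- remaining factors
    rw [rotMat, ← emb_prod, List.map_flatten]
    congr 1
    rw [List.map_map, List.map_map]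
    congr 1
    apply List.map_congr_left
    intro a _
    simp only [Function.comp]
    rw [List.filter_cons]
    have h0 : ¬ (a.succ < (0 : Fin (n+1))) := by simp
    simp only [h0, decide_false, Bool.false_eq_true, if_false, List.filter_map]
    rw [List.map_map, List.map_map]
    have h2 : (List.finRange n).filter ((fun j => decide (a.succ < j)) ∘ Fin.succ)
        = (List.finRange n).filter (fun j => decide (a < j)) := by
      apply List.filter_congr
      intro b _
      simp [Fin.succ_lt_succ_iff]
    rw [h2]
    apply List.map_congr_left
    intro b _
    simp [Function.comp, emb_givens]

lemma list_prod_orth {n : ℕ} (L : List (Matrix (Fin n) (Fin n) ℝ))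
    (h : ∀ M ∈ L, M * Mᵀ = 1 ∧ Mᵀ * M = 1) :
    L.prod * L.prodᵀ = 1 ∧ L.prodᵀ * L.prod = 1 := by
  induction L with
  | nil => simp
  | cons M L ih =>
    have hM := h M (List.mem_cons_self)
    have ih' := ih (fun N hN => h N (List.mem_cons_of_mem M hN))
    constructor
    · rw [List.prod_cons, Matrix.transpose_mul, Matrix.mul_assoc,
        ← Matrix.mul_assoc L.prod, ih'.1, Matrix.one_mul, hM.1]
    · rw [List.prod_cons, Matrix.transpose_mul, Matrix.mul_assoc,
        ← Matrix.mul_assoc Mᵀ, hM.2, Matrix.one_mul, ih'.2]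

lemma det_emb {n : ℕ} (M : Matrix (Fin n) (Fin n) ℝ) : (emb M).det = M.det := by
  rw [Matrix.det_succ_row_zero]
  rw [Finset.sum_eq_single 0]
  · have h1 : (emb M).submatrix Fin.succ ((0 : Fin (n+1)).succAbove) = M := by
      ext a b
      rw [Matrix.submatrix_apply, Fin.zero_succAbove, emb_succ_succ]
    rw [h1, emb_zero_zero]
    simp
  · intro j _ hj
    obtain ⟨m, rfl⟩ := (Fin.eq_zero_or_eq_succ j).resolve_left hj
    rw [emb_zero_succ]
    ring
  · intro h; exact absurd (Finset.mem_univ _) h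

lemma so_eq_rotMat : ∀ (n : ℕ) (V : Matrix (Fin n) (Fin n) ℝ),
    V * Vᵀ = 1 → V.det = 1 → ∃ θ : Fin n → Fin n → ℝ, V = rotMat n θ := by
  intro n
  induction n with
  | zero =>
    intro V _ _
    refine ⟨fun _ _ => 0, ?_⟩
    ext k l
    exact k.elim0
  | succ n ih =>
    intro V hV hdet
    have hVtV : Vᵀ * V = 1 := mul_eq_one_comm.mp hV
    set L : List (Fin (n+1)) := (List.finRange n).map Fin.succ with hL
    have hne : (0 : Fin (n+1)) ∉ L := by
      intro h
      obtain ⟨m, _, hm⟩ := List.mem_map.mp h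
      exact Fin.succ_ne_zero m hm
    have hnd : L.Nodup := (List.nodup_finRange n).map (Fin.succ_injective n)
    have hsupp : ∀ k : Fin (n+1), k ≠ 0 → k ∉ L → V k 0 = 0 := by
      intro k hk hkL
      rcases Fin.eq_zero_or_eq_succ k with rfl | ⟨m, rfl⟩
      · exact absurd rfl hk
      · exact absurd (List.mem_map.mpr ⟨m, List.mem_finRange m, rfl⟩) hkL
    have hnorm : ∑ k, (V k 0) ^ 2 = 1 := by
      have h := congrFun (congrFun hVtV 0) 0
      simp only [Matrix.mul_apply, Matrix.transpose_apply, Matrix.one_apply_eq] at h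
      rw [← h]
      apply Finset.sum_congr rfl
      intro k _; ring
    have hsign : 0 ≤ V 0 0 ∨ L ≠ [] := by
      rcases n with _ | m
      · left
        have : V.det = V 0 0 := Matrix.det_fin_one V
        rw [hdet] at this
        linarith [this.symm]
      · right
        simp [hL, List.finRange_succ]
    obtain ⟨φ, hφ⟩ := elim_lemma L hne hnd (fun k => V k 0) hsupp hnorm hsign
    set P : Matrix (Fin (n+1)) (Fin (n+1)) ℝ :=
      (L.map (fun j => givensMat (n+1) 0 j (φ j))).prod with hP
    have hPorth : P * Pᵀ = 1 ∧ Pᵀ * P = 1 := by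
      apply list_prod_orth
      intro M hM
      obtain ⟨j, hj, rfl⟩ := List.mem_map.mp hM
      have hj0 : (0 : Fin (n+1)) ≠ j := fun h => hne (h ▸ hj)
      exact ⟨givens_mul_transpose hj0 _, givens_transpose_mul hj0 _⟩
    set W : Matrix (Fin (n+1)) (Fin (n+1)) ℝ := Pᵀ * V with hW
    have hWo : W * Wᵀ = 1 := by
      rw [hW, Matrix.transpose_mul, Matrix.transpose_transpose, Matrix.mul_assoc,
        ← Matrix.mul_assoc V, hV, Matrix.one_mul, hPorth.2]
    have hWcol : ∀ k, W k 0 = (Pi.single (0 : Fin (n+1)) (1:ℝ) : Fin (n+1) → ℝ) k := by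
      have h1 : V.mulVec (Pi.single 0 1) = fun k => V k 0 := by
        rw [Matrix.mulVec_single]; funext k; simp
      have h2 : W.mulVec (Pi.single 0 1) = Pi.single 0 1 := by
        rw [hW, ← Matrix.mulVec_mulVec, h1, ← hφ, Matrix.mulVec_mulVec, hPorth.2,
          Matrix.one_mulVec]
      intro k
      have := congrFun h2 k
      rw [Matrix.mulVec_single] at this
      simpa using this
    have hW00 : W 0 0 = 1 := by rw [hWcol 0]; simp
    have hWrow : ∀ l : Fin n, W 0 l.succ = 0 := by
      have hsum : ∑ m, W 0 m ^ 2 = 1 := by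
        have h := congrFun (congrFun hWo 0) 0
        simp only [Matrix.mul_apply, Matrix.transpose_apply, Matrix.one_apply_eq] at h
        rw [← h]
        apply Finset.sum_congr rfl
        intro k _; ring
      have herase : ∑ m ∈ Finset.univ.erase 0, W 0 m ^ 2 = 0 := by
        have h2 := Finset.add_sum_erase Finset.univ (fun m => W 0 m ^ 2) (Finset.mem_univ 0)
        rw [hsum, hW00] at h2
        nlinarith [h2]
      intro l
      have hl : l.succ ∈ Finset.univ.erase (0 : Fin (n+1)) :=
        Finset.mem_erase.mpr ⟨Fin.succ_ne_zero l, Finset.mem_univ _⟩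
      have := (Finset.sum_eq_zero_iff_of_nonneg (fun m _ => sq_nonneg (W 0 m))).mp herase l.succ hl
      exact pow_eq_zero_iff (two_ne_zero) |>.mp this
    set V' : Matrix (Fin n) (Fin n) ℝ := fun a b => W a.succ b.succ with hV'
    have hembW : W = emb V' := by
      ext k l
      rcases Fin.eq_zero_or_eq_succ k with rfl | ⟨a, rfl⟩
      · rcases Fin.eq_zero_or_eq_succ l with rfl | ⟨b, rfl⟩
        · rw [hW00, emb_zero_zero]
        · rw [hWrow b, emb_zero_succ]
      · rcases Fin.eq_zero_or_eq_succ l with rfl | ⟨b, rfl⟩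
        · rw [emb_succ_zero, hWcol a.succ, Pi.single_eq_of_ne (Fin.succ_ne_zero a)]
        · rw [emb_succ_succ]
    have hV'o : V' * V'ᵀ = 1 := by
      ext a b
      have h := congrFun (congrFun hWo a.succ) b.succ
      rw [Matrix.mul_apply, Fin.sum_univ_succ] at h
      have h0 : W a.succ 0 * Wᵀ 0 b.succ = 0 := by
        rw [Matrix.transpose_apply, hWcol a.succ, Pi.single_eq_of_ne (Fin.succ_ne_zero a)]
        ring
      rw [h0, zero_add] at h
      rw [Matrix.mul_apply]
      simp only [Matrix.transpose_apply] at h ⊢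
      rw [h]
      simp [Matrix.one_apply, Fin.succ_inj]
    have hdl : ∀ (Lm : List (Matrix (Fin (n+1)) (Fin (n+1)) ℝ)),
        (∀ M ∈ Lm, M.det = 1) → Lm.prod.det = 1 := by
      intro Lm
      induction Lm with
      | nil => simp
      | cons M Lt ihl =>
        intro h
        rw [List.prod_cons, Matrix.det_mul, h M (List.mem_cons_self),
          ihl (fun N hN => h N (List.mem_cons_of_mem _ hN)), one_mul]
    have hdetP : P.det = 1 := by
      rw [hP]
      apply hdl
      intro M hM
      obtain ⟨j, hj, rfl⟩ := List.mem_map.mp hM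
      exact givens_det (fun h => hne (by rw [h]; exact hj)) _
    have hV'det : V'.det = 1 := by
      have h1 : W.det = 1 := by
        rw [hW, Matrix.det_mul, Matrix.det_transpose, hdetP, hdet]; ring
      rw [hembW, det_emb] at h1
      exact h1
    obtain ⟨θ', hθ'⟩ := ih V' hV'o hV'det
    refine ⟨fun a b => Fin.cases (φ b) (fun a' => Fin.cases 0 (fun b' => θ' a' b') b) a, ?_⟩
    rw [rotMat_succ]
    have hth1 : ∀ m : Fin n,
        (fun a b => Fin.cases (φ b) (fun a' => Fin.cases 0 (fun b' => θ' a' b') b) a :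
          Fin (n+1) → Fin (n+1) → ℝ) 0 m.succ = φ m.succ := by
      intro m; simp
    have hth2 : (fun a b =>
        (fun a b => Fin.cases (φ b) (fun a' => Fin.cases 0 (fun b' => θ' a' b') b) a :
          Fin (n+1) → Fin (n+1) → ℝ) a.succ b.succ) = θ' := by
      funext a b; simp
    rw [hth2, ← hθ', ← hembW]
    have hPfactor : (((List.finRange n).map (fun m => givensMat (n+1) 0 m.succ
        ((fun a b => Fin.cases (φ b) (fun a' => Fin.cases 0 (fun b' => θ' a' b') b) a :
          Fin (n+1) → Fin (n+1) → ℝ) 0 m.succ))).prod) = P := by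
      rw [hP, hL, List.map_map]
      congr 1
    rw [hPfactor, hW, ← Matrix.mul_assoc, hPorth.1, Matrix.one_mul]


/-- Every real special orthogonal matrix (V Vᵀ = I, det V = 1) of dimension n ≥ 2 is a
product of Givens rotations in lexicographic order: V = V(θ) for some family of angles. -/
theorem specialOrthogonal_eq_rotMat (n : ℕ) (hn : 2 ≤ n) (V : Matrix (Fin n) (Fin n) ℝ)
    (hV : V * Vᵀ = 1) (hdet : V.det = 1) :
    ∃ θ : Fin n → Fin n → ℝ, V = rotMat n θ := by
  exact so_eq_rotMat n V hV hdet
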